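/- Let F be a finite set, φ : F^ℕ → ℝ continuous, and let M denote the set of shift-invariant Borel probability measures ν maximizing ∫φ dν. Let (β_i) be positive reals with β_i → +∞, let μ_i be an equilibrium state for β_iφ for each i, and suppose μ_i → μ in the weak-* topology. Then μ ∈ M and h(μ) = sup{h(ν) : ν ∈ M}; that is, weak-* accumulation points of equilibrium states at zero temperature maximize entropy among the φ-maximizing measures. -/

import Mathlib

open MeasureTheory Filter Topology
open scoped ENNReal Classical

set_option linter.unusedSectionVars false
set_option maxHeartbeats 1000000

noncomputable section

/-- The shift map `(Tx)(n) = x(n+1)` on `F^ℕ`. -/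
def shiftF {F : Type} (x : ℕ → F) : ℕ → F := fun n => x (n + 1)

/-- The metric `d(x,y) = 2^{-min{n : x n ≠ y n}}` for `x ≠ y`, and `d(x,x) = 0`. -/
def distF {F : Type} (x y : ℕ → F) : ℝ :=
  if x = y then 0 else ((2 : ℝ) ^ sInf {n : ℕ | x n ≠ y n})⁻¹

/-- A subshift: a nonempty, closed, shift-invariant subset of `F^ℕ`. -/
def IsSubshiftF {F : Type} [TopologicalSpace F] (X : Set (ℕ → F)) : Prop :=
  X.Nonempty ∧ IsClosed X ∧ ∀ x ∈ X, shiftF x ∈ X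

/-- The potential `φ_X(y) = -d(y, X) = -inf {d(y,x) : x ∈ X}`. -/
def phiF {F : Type} (X : Set (ℕ → F)) (y : ℕ → F) : ℝ := -sInf (distF y '' X)

/-- The cylinder set of points whose first `n` symbols form the word `w`. -/
def cylinderF {F : Type} {n : ℕ} (w : Fin n → F) : Set (ℕ → F) :=
  {x | ∀ i : Fin n, x i = w i}

/-- The entropy `H_n(μ)` of the `n`-block marginal of `μ` (base-2 logarithm). -/
def HblockF {F : Type} [Fintype F] [MeasurableSpace F] (μ : Measure (ℕ → F)) (n : ℕ) : ℝ :=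
  -∑ w : Fin n → F, (μ (cylinderF w)).toReal * Real.logb 2 (μ (cylinderF w)).toReal

/-- The Kolmogorov–Sinai entropy `h(μ) = lim_n H_n(μ)/n`; since the limit exists for
shift-invariant measures, we may define it as a `limsup`. -/
def entropyF {F : Type} [Fintype F] [MeasurableSpace F] (μ : Measure (ℕ → F)) : ℝ :=
  limsup (fun n : ℕ => HblockF μ n / n) atTop

/-- A shift-invariant Borel probability measure on `F^ℕ`. -/
def IsInvProbF {F : Type} [MeasurableSpace F] (μ : Measure (ℕ → F)) : Prop :=
  IsProbabilityMeasure μ ∧ μ.map shiftF = μ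

/-- An equilibrium state for `βφ`: a shift-invariant Borel probability measure maximizing
`ν ↦ β∫φ dν + h(ν)` over all shift-invariant Borel probability measures. -/
def IsEquilibriumF {F : Type} [Fintype F] [MeasurableSpace F]
    (φ : (ℕ → F) → ℝ) (β : ℝ) (μ : Measure (ℕ → F)) : Prop :=
  IsInvProbF μ ∧ ∀ ν : Measure (ℕ → F), IsInvProbF ν →
    β * ∫ x, φ x ∂ν + entropyF ν ≤ β * ∫ x, φ x ∂μ + entropyF μ

/-- `ν` is a `φ`-maximizing measure: a shift-invariant Borel probability measure
maximizing `ν ↦ ∫φ dν` (i.e. a member of `M`). -/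
def IsMaximizingF {F : Type} [MeasurableSpace F] (φ : (ℕ → F) → ℝ)
    (ν : Measure (ℕ → F)) : Prop :=
  IsInvProbF ν ∧ ∀ ν' : Measure (ℕ → F), IsInvProbF ν' → ∫ x, φ x ∂ν' ≤ ∫ x, φ x ∂ν

section Aux

variable {F : Type} [Fintype F] [MeasurableSpace F] [DiscreteMeasurableSpace F]

lemma measurable_shiftF : Measurable (shiftF (F := F)) :=
  measurable_pi_lambda _ fun n => measurable_pi_apply (n + 1)

lemma shiftF_iterate (k : ℕ) (x : ℕ → F) (j : ℕ) : (shiftF^[k] x) j = x (j + k) := by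
  induction k generalizing x with
  | zero => rfl
  | succ k ih =>
    rw [Function.iterate_succ_apply, ih (shiftF x)]
    simp [shiftF, Nat.add_assoc]

lemma measurableSet_cylinderF {n : ℕ} (w : Fin n → F) : MeasurableSet (cylinderF w) := by
  have h : cylinderF w = ⋂ i : Fin n, (fun x : ℕ → F => x i) ⁻¹' {w i} := by
    ext x; simp [cylinderF]
  rw [h]
  exact MeasurableSet.iInter fun i =>
    (measurable_pi_apply (i : ℕ)) (MeasurableSet.singleton _)

lemma cylinderF_disjoint {n : ℕ} {w w' : Fin n → F} (h : w ≠ w') :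
    Disjoint (cylinderF w) (cylinderF w') := by
  rw [Set.disjoint_left]
  intro x hx hx'
  exact h (funext fun i => (hx i).symm.trans (hx' i))

lemma measure_biUnion_cyl (μ : Measure (ℕ → F)) {k : ℕ} (t : Finset (Fin k → F)) :
    μ (⋃ w ∈ t, cylinderF w) = ∑ w ∈ t, μ (cylinderF w) :=
  measure_biUnion_finset (fun _ _ _ _ hne => cylinderF_disjoint hne)
    (fun w _ => measurableSet_cylinderF w)

/-- first `n` letters of a word of length `n+m`. -/
def firstW {n m : ℕ} (w : Fin (n + m) → F) : Fin n → F := fun i => w (Fin.castAdd m i)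

/-- last `m` letters of a word of length `n+m`. -/
def lastW {n m : ℕ} (w : Fin (n + m) → F) : Fin m → F := fun j => w (Fin.natAdd n j)

lemma iUnion_cyl_univ (n : ℕ) :
    (⋃ w ∈ (Finset.univ : Finset (Fin n → F)), cylinderF w) = Set.univ := by
  ext x
  simp only [Set.mem_iUnion, Finset.mem_univ, Set.mem_univ, iff_true, exists_true_left]
  exact ⟨fun i => x i, fun i => rfl⟩

lemma cyl_first_eq {n m : ℕ} (u : Fin n → F) :
    cylinderF u =
      ⋃ w ∈ Finset.univ.filter (fun w : Fin (n + m) → F => firstW w = u), cylinderF w := by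
  ext x
  simp only [Set.mem_iUnion, Finset.mem_filter, Finset.mem_univ, true_and]
  constructor
  · intro hx
    refine ⟨fun i => x i, ?_, fun i => rfl⟩
    funext i
    show x ((Fin.castAdd m i : Fin (n + m)) : ℕ) = u i
    rw [Fin.coe_castAdd]
    exact hx i
  · rintro ⟨w, hw, hxw⟩ i
    have := hxw (Fin.castAdd m i)
    rw [Fin.coe_castAdd] at this
    rw [this, ← hw]
    rfl

lemma preimage_last_eq {n m : ℕ} (v : Fin m → F) :
    (shiftF^[n]) ⁻¹' cylinderF v =
      ⋃ w ∈ Finset.univ.filter (fun w : Fin (n + m) → F => lastW w = v), cylinderF w := by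
  ext x
  simp only [Set.mem_preimage, Set.mem_iUnion, Finset.mem_filter, Finset.mem_univ, true_and]
  constructor
  · intro hx
    refine ⟨fun i => x i, ?_, fun i => rfl⟩
    funext j
    show x ((Fin.natAdd n j : Fin (n + m)) : ℕ) = v j
    rw [Fin.coe_natAdd, Nat.add_comm]
    have := hx j
    rwa [shiftF_iterate] at this
  · rintro ⟨w, hw, hxw⟩ j
    show (shiftF^[n] x) (j : ℕ) = v j
    rw [shiftF_iterate]
    have := hxw (Fin.natAdd n j)
    rw [Fin.coe_natAdd, Nat.add_comm] at this
    rw [this, ← hw]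
    rfl

lemma cyl_subset_first {n m : ℕ} (w : Fin (n + m) → F) :
    cylinderF w ⊆ cylinderF (firstW w) := by
  intro x hx i
  have := hx (Fin.castAdd m i)
  rw [Fin.coe_castAdd] at this
  exact this

lemma cyl_subset_last {n m : ℕ} (w : Fin (n + m) → F) :
    cylinderF w ⊆ (shiftF^[n]) ⁻¹' cylinderF (lastW w) := by
  intro x hx j
  show (shiftF^[n] x) (j : ℕ) = lastW w j
  rw [shiftF_iterate]
  have := hx (Fin.natAdd n j)
  rw [Fin.coe_natAdd, Nat.add_comm] at this
  exact this

lemma measure_iterate_preimage (μ : Measure (ℕ → F)) (hinv : μ.map shiftF = μ)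
    (k : ℕ) {s : Set (ℕ → F)} (hs : MeasurableSet s) :
    μ ((shiftF^[k]) ⁻¹' s) = μ s := by
  induction k with
  | zero => simp
  | succ k ih =>
    have hms : Measurable (shiftF^[k] : (ℕ → F) → (ℕ → F)) := measurable_shiftF.iterate k
    rw [Function.iterate_succ, Set.preimage_comp]
    have h2 := Measure.map_apply (μ := μ) measurable_shiftF (hms hs)
    rw [hinv] at h2
    rw [← h2, ih]

end Aux



lemma gibbsF {ι : Type*} (s : Finset ι) (p q : ι → ℝ) (hp : ∀ i ∈ s, 0 ≤ p i)
    (hq : ∀ i ∈ s, 0 ≤ q i) (hpq : ∀ i ∈ s, p i ≠ 0 → q i ≠ 0)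
    (hps : ∑ i ∈ s, p i = 1) (hqs : ∑ i ∈ s, q i ≤ 1) :
    ∑ i ∈ s, Real.negMulLog (p i) ≤ -∑ i ∈ s, p i * Real.log (q i) := by
  have key : ∀ i ∈ s, Real.negMulLog (p i) + p i * Real.log (q i) ≤ q i - p i := by
    intro i hi
    rcases eq_or_lt_of_le (hp i hi) with h0 | h0
    · rw [← h0, Real.negMulLog_zero]
      simpa using hq i hi
    · have hq0 : 0 < q i := lt_of_le_of_ne (hq i hi) (Ne.symm (hpq i hi (ne_of_gt h0)))
      have hlog : Real.log (q i / p i) ≤ q i / p i - 1 :=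
        Real.log_le_sub_one_of_pos (by positivity)
      rw [Real.log_div (ne_of_gt hq0) (ne_of_gt h0)] at hlog
      have h2 := mul_le_mul_of_nonneg_left hlog (le_of_lt h0)
      calc Real.negMulLog (p i) + p i * Real.log (q i)
          = p i * (Real.log (q i) - Real.log (p i)) := by rw [Real.negMulLog]; ring
        _ ≤ p i * (q i / p i - 1) := h2
        _ = q i - p i := by field_simp
  have h3 : ∑ i ∈ s, (Real.negMulLog (p i) + p i * Real.log (q i)) ≤ ∑ i ∈ s, (q i - p i) :=
    Finset.sum_le_sum key
  rw [Finset.sum_add_distrib, Finset.sum_sub_distrib, hps] at h3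
  linarith

/-- natural-log block entropy -/
def hnatF {F : Type} [Fintype F] [MeasurableSpace F] (μ : Measure (ℕ → F)) (n : ℕ) : ℝ :=
  ∑ w : Fin n → F, Real.negMulLog (μ (cylinderF w)).toReal

section Aux2
variable {F : Type} [Fintype F] [MeasurableSpace F] [DiscreteMeasurableSpace F]

lemma HblockF_eq_hnat (μ : Measure (ℕ → F)) (n : ℕ) :
    HblockF μ n = hnatF μ n / Real.log 2 := by
  unfold HblockF hnatF
  rw [Finset.sum_div, ← Finset.sum_neg_distrib]
  refine Finset.sum_congr rfl fun w _ => ?_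
  rw [Real.negMulLog, Real.logb]
  ring

lemma sum_p_eq_one (μ : Measure (ℕ → F)) [IsProbabilityMeasure μ] (n : ℕ) :
    ∑ w : Fin n → F, (μ (cylinderF w)).toReal = 1 := by
  have h1 := measure_biUnion_cyl μ (Finset.univ : Finset (Fin n → F))
  rw [iUnion_cyl_univ, measure_univ] at h1
  rw [← ENNReal.toReal_sum (fun w _ => measure_ne_top μ _), ← h1, ENNReal.toReal_one]

lemma sum_first (μ : Measure (ℕ → F)) [IsProbabilityMeasure μ] {n m : ℕ} (u : Fin n → F) :
    ∑ w ∈ Finset.univ.filter (fun w : Fin (n + m) → F => firstW w = u),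
      (μ (cylinderF w)).toReal = (μ (cylinderF u)).toReal := by
  rw [← ENNReal.toReal_sum (fun w _ => measure_ne_top μ _), ← measure_biUnion_cyl,
    ← cyl_first_eq]

lemma sum_last (μ : Measure (ℕ → F)) [IsProbabilityMeasure μ] (hinv : μ.map shiftF = μ)
    {n m : ℕ} (v : Fin m → F) :
    ∑ w ∈ Finset.univ.filter (fun w : Fin (n + m) → F => lastW w = v),
      (μ (cylinderF w)).toReal = (μ (cylinderF v)).toReal := by
  rw [← ENNReal.toReal_sum (fun w _ => measure_ne_top μ _), ← measure_biUnion_cyl,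
    ← preimage_last_eq, measure_iterate_preimage μ hinv n (measurableSet_cylinderF v)]

lemma toReal_measure_le_one (μ : Measure (ℕ → F)) [IsProbabilityMeasure μ] (s : Set (ℕ → F)) :
    (μ s).toReal ≤ 1 := by
  have := prob_le_one (μ := μ) (s := s)
  rw [← ENNReal.toReal_one]
  exact ENNReal.toReal_mono ENNReal.one_ne_top this

lemma hnatF_nonneg (μ : Measure (ℕ → F)) [IsProbabilityMeasure μ] (n : ℕ) :
    0 ≤ hnatF μ n :=
  Finset.sum_nonneg fun w _ =>
    Real.negMulLog_nonneg ENNReal.toReal_nonneg (toReal_measure_le_one μ _)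

end Aux2

section Aux3
variable {F : Type} [Fintype F] [MeasurableSpace F] [DiscreteMeasurableSpace F]

/-- splitting a word of length `n+m` into its first and last parts. -/
def splitEquiv {F : Type} (n m : ℕ) : (Fin (n + m) → F) ≃ (Fin n → F) × (Fin m → F) where
  toFun w := (firstW w, lastW w)
  invFun uv := fun i => Sum.elim uv.1 uv.2 (finSumFinEquiv.symm i)
  left_inv w := by
    funext i
    obtain ⟨s, rfl⟩ : ∃ s, finSumFinEquiv s = i := ⟨finSumFinEquiv.symm i, by simp⟩
    show Sum.elim (firstW w) (lastW w) (finSumFinEquiv.symm (finSumFinEquiv s)) = _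
    rw [Equiv.symm_apply_apply]
    cases s with
    | inl a => simp [firstW, finSumFinEquiv_apply_left]
    | inr b => simp [lastW, finSumFinEquiv_apply_right]
  right_inv uv := by
    obtain ⟨u, v⟩ := uv
    refine Prod.ext ?_ ?_
    · funext i
      show Sum.elim u v (finSumFinEquiv.symm (Fin.castAdd m i)) = u i
      rw [finSumFinEquiv_symm_apply_castAdd]
      rfl
    · funext j
      show Sum.elim u v (finSumFinEquiv.symm (Fin.natAdd n j)) = v j
      rw [finSumFinEquiv_symm_apply_natAdd]
      rfl

lemma hnatF_subadd (μ : Measure (ℕ → F)) [IsProbabilityMeasure μ]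
    (hinv : μ.map shiftF = μ) (n m : ℕ) :
    hnatF μ (n + m) ≤ hnatF μ n + hnatF μ m := by
  classical
  set p : (Fin (n + m) → F) → ℝ := fun w => (μ (cylinderF w)).toReal with hp_def
  set f : (Fin n → F) → ℝ := fun u => (μ (cylinderF u)).toReal with hf_def
  set g : (Fin m → F) → ℝ := fun v => (μ (cylinderF v)).toReal with hg_def
  set q : (Fin (n + m) → F) → ℝ := fun w => f (firstW w) * g (lastW w) with hq_def
  have hp_le_f : ∀ w, p w ≤ f (firstW w) := fun w =>
    ENNReal.toReal_mono (measure_ne_top μ _) (measure_mono (cyl_subset_first w))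
  have hp_le_g : ∀ w, p w ≤ g (lastW w) := by
    intro w
    have h1 : μ (cylinderF w) ≤ μ ((shiftF^[n]) ⁻¹' cylinderF (lastW w)) :=
      measure_mono (cyl_subset_last w)
    rw [measure_iterate_preimage μ hinv n (measurableSet_cylinderF _)] at h1
    exact ENNReal.toReal_mono (measure_ne_top μ _) h1
  have hsum_q : ∑ w : Fin (n + m) → F, q w = 1 := by
    calc ∑ w : Fin (n + m) → F, q w
        = ∑ uv : (Fin n → F) × (Fin m → F), f uv.1 * g uv.2 :=
          Fintype.sum_equiv (splitEquiv n m) _ _ (fun w => rfl)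
      _ = (∑ u : Fin n → F, f u) * (∑ v : Fin m → F, g v) := by
          rw [Finset.sum_mul_sum, Fintype.sum_prod_type]
      _ = 1 := by rw [hf_def, hg_def, sum_p_eq_one μ n, sum_p_eq_one μ m, mul_one]
  have hgibbs := gibbsF Finset.univ p q (fun w _ => ENNReal.toReal_nonneg)
    (fun w _ => mul_nonneg ENNReal.toReal_nonneg ENNReal.toReal_nonneg)
    (fun w _ hw => by
      have hw' : 0 < p w := lt_of_le_of_ne ENNReal.toReal_nonneg (Ne.symm hw)
      exact ne_of_gt (mul_pos (lt_of_lt_of_le hw' (hp_le_f w))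
        (lt_of_lt_of_le hw' (hp_le_g w))))
    (sum_p_eq_one μ (n + m)) (le_of_eq hsum_q)
  have hsplit : ∀ w : Fin (n + m) → F,
      p w * Real.log (q w)
        = p w * Real.log (f (firstW w)) + p w * Real.log (g (lastW w)) := by
    intro w
    by_cases hw : p w = 0
    · simp [hw]
    · have hw' : 0 < p w := lt_of_le_of_ne ENNReal.toReal_nonneg (Ne.symm hw)
      rw [hq_def, Real.log_mul (ne_of_gt (lt_of_lt_of_le hw' (hp_le_f w)))
        (ne_of_gt (lt_of_lt_of_le hw' (hp_le_g w))), mul_add]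
  have hfirst : ∑ w : Fin (n + m) → F, p w * Real.log (f (firstW w))
      = ∑ u : Fin n → F, f u * Real.log (f u) := by
    rw [← Finset.sum_fiberwise Finset.univ firstW
      (fun w => p w * Real.log (f (firstW w)))]
    refine Finset.sum_congr rfl fun u _ => ?_
    have h1 : ∑ w ∈ Finset.univ.filter (fun w : Fin (n + m) → F => firstW w = u),
        p w * Real.log (f (firstW w))
        = ∑ w ∈ Finset.univ.filter (fun w : Fin (n + m) → F => firstW w = u),
          p w * Real.log (f u) := by
      refine Finset.sum_congr rfl fun w hw => ?_
      rw [(Finset.mem_filter.mp hw).2]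
    rw [h1, ← Finset.sum_mul, sum_first μ u]
  have hlast : ∑ w : Fin (n + m) → F, p w * Real.log (g (lastW w))
      = ∑ v : Fin m → F, g v * Real.log (g v) := by
    rw [← Finset.sum_fiberwise Finset.univ lastW
      (fun w => p w * Real.log (g (lastW w)))]
    refine Finset.sum_congr rfl fun v _ => ?_
    have h1 : ∑ w ∈ Finset.univ.filter (fun w : Fin (n + m) → F => lastW w = v),
        p w * Real.log (g (lastW w))
        = ∑ w ∈ Finset.univ.filter (fun w : Fin (n + m) → F => lastW w = v),
          p w * Real.log (g v) := by
      refine Finset.sum_congr rfl fun w hw => ?_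
      rw [(Finset.mem_filter.mp hw).2]
    rw [h1, ← Finset.sum_mul, sum_last μ hinv v]
  have hq_eq : ∑ w : Fin (n + m) → F, p w * Real.log (q w)
      = ∑ u : Fin n → F, f u * Real.log (f u) + ∑ v : Fin m → F, g v * Real.log (g v) := by
    calc ∑ w : Fin (n + m) → F, p w * Real.log (q w)
        = ∑ w : Fin (n + m) → F,
            (p w * Real.log (f (firstW w)) + p w * Real.log (g (lastW w))) :=
          Finset.sum_congr rfl fun w _ => hsplit w
      _ = _ := by rw [Finset.sum_add_distrib, hfirst, hlast]
  have hn : hnatF μ n = -∑ u : Fin n → F, f u * Real.log (f u) := by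
    unfold hnatF
    rw [← Finset.sum_neg_distrib]
    exact Finset.sum_congr rfl fun u _ => by rw [Real.negMulLog]; ring
  have hm : hnatF μ m = -∑ v : Fin m → F, g v * Real.log (g v) := by
    unfold hnatF
    rw [← Finset.sum_neg_distrib]
    exact Finset.sum_congr rfl fun v _ => by rw [Real.negMulLog]; ring
  have : hnatF μ (n + m) ≤ -∑ w : Fin (n + m) → F, p w * Real.log (q w) := hgibbs
  rw [hq_eq] at this
  rw [hn, hm]
  linarith

end Aux3

section Aux4
variable {F : Type} [Fintype F] [MeasurableSpace F] [DiscreteMeasurableSpace F]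

lemma HblockF_nonneg (μ : Measure (ℕ → F)) [IsProbabilityMeasure μ] (n : ℕ) :
    0 ≤ HblockF μ n := by
  rw [HblockF_eq_hnat]
  exact div_nonneg (hnatF_nonneg μ n) (Real.log_nonneg one_le_two)

lemma HblockF_subadditive (μ : Measure (ℕ → F)) [IsProbabilityMeasure μ]
    (hinv : μ.map shiftF = μ) : Subadditive (fun n => HblockF μ n) := by
  intro n m
  simp only [HblockF_eq_hnat]
  rw [← add_div, div_le_div_iff_of_pos_right (Real.log_pos one_lt_two)]
  exact hnatF_subadd μ hinv n m

lemma HblockF_bddBelow (μ : Measure (ℕ → F)) [IsProbabilityMeasure μ] :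
    BddBelow (Set.range fun n : ℕ => HblockF μ n / n) := by
  refine ⟨0, ?_⟩
  rintro x ⟨n, rfl⟩
  exact div_nonneg (HblockF_nonneg μ n) (Nat.cast_nonneg n)

lemma tendsto_HblockF_div (μ : Measure (ℕ → F)) [IsProbabilityMeasure μ]
    (hinv : μ.map shiftF = μ) :
    Tendsto (fun n : ℕ => HblockF μ n / n) atTop (𝓝 ((HblockF_subadditive μ hinv).lim)) :=
  (HblockF_subadditive μ hinv).tendsto_lim (HblockF_bddBelow μ)

lemma entropyF_eq_lim (μ : Measure (ℕ → F)) [IsProbabilityMeasure μ]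
    (hinv : μ.map shiftF = μ) :
    entropyF μ = (HblockF_subadditive μ hinv).lim :=
  (tendsto_HblockF_div μ hinv).limsup_eq

lemma entropyF_le_div (μ : Measure (ℕ → F)) [IsProbabilityMeasure μ]
    (hinv : μ.map shiftF = μ) {n : ℕ} (hn : n ≠ 0) :
    entropyF μ ≤ HblockF μ n / n := by
  rw [entropyF_eq_lim μ hinv]
  exact (HblockF_subadditive μ hinv).lim_le_div (HblockF_bddBelow μ) hn

lemma entropyF_nonneg (μ : Measure (ℕ → F)) [IsProbabilityMeasure μ]
    (hinv : μ.map shiftF = μ) : 0 ≤ entropyF μ := by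
  refine ge_of_tendsto (tendsto_HblockF_div μ hinv) (Eventually.of_forall fun n => ?_) |>.trans
    (le_of_eq (entropyF_eq_lim μ hinv).symm) |>.trans (le_refl _)
  exact div_nonneg (HblockF_nonneg μ n) (Nat.cast_nonneg n)

lemma hnatF_one_le (μ : Measure (ℕ → F)) [IsProbabilityMeasure μ] [Nonempty F] :
    hnatF μ 1 ≤ Real.log (Fintype.card F) := by
  classical
  have hcard : (0 : ℝ) < (Fintype.card (Fin 1 → F) : ℝ) := by
    have : 0 < Fintype.card (Fin 1 → F) := Fintype.card_pos
    exact_mod_cast this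
  have hq : ∑ _w : Fin 1 → F, ((Fintype.card (Fin 1 → F) : ℝ))⁻¹ = 1 := by
    rw [Finset.sum_const, Finset.card_univ, nsmul_eq_mul, mul_inv_cancel₀ (ne_of_gt hcard)]
  have h := gibbsF Finset.univ (fun w : Fin 1 → F => (μ (cylinderF w)).toReal)
    (fun _ => ((Fintype.card (Fin 1 → F) : ℝ))⁻¹)
    (fun _ _ => ENNReal.toReal_nonneg)
    (fun _ _ => inv_nonneg.mpr (le_of_lt hcard))
    (fun _ _ _ => inv_ne_zero (ne_of_gt hcard))
    (sum_p_eq_one μ 1) (le_of_eq hq)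
  have h2 : -∑ w : Fin 1 → F, (μ (cylinderF w)).toReal
        * Real.log ((Fintype.card (Fin 1 → F) : ℝ))⁻¹
      = Real.log (Fintype.card (Fin 1 → F)) := by
    rw [Real.log_inv]
    simp only [mul_neg, Finset.sum_neg_distrib, neg_neg, ← Finset.sum_mul, sum_p_eq_one μ 1,
      one_mul]
  have h3 : Fintype.card (Fin 1 → F) = Fintype.card F := by simp
  calc hnatF μ 1 ≤ _ := h
    _ = Real.log (Fintype.card (Fin 1 → F)) := h2
    _ = Real.log (Fintype.card F) := by rw [h3]

lemma entropyF_le_const (μ : Measure (ℕ → F)) [IsProbabilityMeasure μ] [Nonempty F]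
    (hinv : μ.map shiftF = μ) :
    entropyF μ ≤ Real.log (Fintype.card F) / Real.log 2 := by
  have h1 := entropyF_le_div μ hinv (n := 1) one_ne_zero
  rw [HblockF_eq_hnat] at h1
  simp only [Nat.cast_one, div_one] at h1
  exact h1.trans ((div_le_div_iff_of_pos_right (Real.log_pos one_lt_two)).mpr (hnatF_one_le μ))

end Aux4


section Main
variable {F : Type} [Fintype F] [TopologicalSpace F] [DiscreteTopology F]
  [MeasurableSpace F] [DiscreteMeasurableSpace F]

lemma continuous_shiftF : Continuous (shiftF (F := F)) :=
  continuous_pi fun n => continuous_apply (n + 1)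

lemma isClopen_cylinderF {n : ℕ} (w : Fin n → F) : IsClopen (cylinderF w) := by
  have h : cylinderF w = ⋂ i : Fin n, (fun x : ℕ → F => x i) ⁻¹' {w i} := by
    ext x; simp [cylinderF]
  rw [h]
  constructor
  · exact isClosed_iInter fun i => (isClosed_discrete _).preimage (continuous_apply (i : ℕ))
  · exact isOpen_iInter_of_finite fun i =>
      (isOpen_discrete _).preimage (continuous_apply (i : ℕ))

lemma integral_indicator_cyl {n : ℕ} (w : Fin n → F) (ν : Measure (ℕ → F)) :
    ∫ x, (BoundedContinuousFunction.indicator (cylinderF w) (isClopen_cylinderF w)) x ∂ν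
      = (ν (cylinderF w)).toReal := by
  have h : ∀ x, (BoundedContinuousFunction.indicator (cylinderF w) (isClopen_cylinderF w)) x
      = (cylinderF w).indicator (fun _ => (1 : ℝ)) x := fun x => rfl
  simp only [h]
  rw [integral_indicator_const (1 : ℝ) (measurableSet_cylinderF w), smul_eq_mul, mul_one]
  rfl

end Main



/-- Let `φ : F^ℕ → ℝ` be continuous, `β_i → +∞` positive reals, `μ_i`
an equilibrium state for `β_i φ`, and suppose `μ_i → μ` weak-*.  Then `μ ∈ M` (the set of
`φ`-maximizing measures) and `h(μ) = sup {h(ν) : ν ∈ M}`: zero-temperature accumulation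
points of equilibrium states maximize entropy among the `φ`-maximizing measures. -/
theorem stmt13 (F : Type) [Fintype F] [TopologicalSpace F] [DiscreteTopology F]
    [MeasurableSpace F] [DiscreteMeasurableSpace F]
    (φ : (ℕ → F) → ℝ) (hφ : Continuous φ)
    (β : ℕ → ℝ) (hβpos : ∀ i, 0 < β i) (hβ : Tendsto β atTop atTop)
    (μs : ℕ → Measure (ℕ → F)) (hμs : ∀ i, IsEquilibriumF φ (β i) (μs i))
    (μ : Measure (ℕ → F))
    (hconv : ∀ f : C(ℕ → F, ℝ),
      Tendsto (fun i => ∫ x, f x ∂(μs i)) atTop (𝓝 (∫ x, f x ∂μ))) :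
    IsMaximizingF φ μ ∧
      entropyF μ = sSup {r | ∃ ν : Measure (ℕ → F), IsMaximizingF φ ν ∧ r = entropyF ν} := by
  classical
  -- F is nonempty
  have hFne : Nonempty F := by
    by_contra h
    haveI : IsEmpty F := not_nonempty_iff.mp h
    haveI : IsEmpty (ℕ → F) := ⟨fun x => IsEmpty.false (x 0)⟩
    have h1 := (hμs 0).1.1.measure_univ
    rw [Set.univ_eq_empty_iff.mpr ‹IsEmpty (ℕ → F)›, measure_empty] at h1
    exact zero_ne_one h1
  haveI := hFne
  haveI hPi : ∀ i, IsProbabilityMeasure (μs i) := fun i => (hμs i).1.1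
  -- μ is a probability measure
  haveI hPμ : IsProbabilityMeasure μ := by
    have h1 := hconv (ContinuousMap.const _ (1 : ℝ))
    have h2 : (fun i => ∫ x, (ContinuousMap.const (ℕ → F) (1 : ℝ)) x ∂(μs i))
        = fun _ => (1 : ℝ) := by
      funext i; simp
    rw [h2] at h1
    have h3 := tendsto_nhds_unique h1 tendsto_const_nhds
    simp only [ContinuousMap.const_apply, integral_const, smul_eq_mul, mul_one] at h3
    exact ⟨(ENNReal.toReal_eq_one_iff _).mp h3⟩
  -- μ is shift-invariant
  have hinvμ : μ.map shiftF = μ := by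
    haveI : IsProbabilityMeasure (μ.map shiftF) :=
      Measure.isProbabilityMeasure_map measurable_shiftF.aemeasurable
    apply ext_of_forall_lintegral_eq_of_IsFiniteMeasure
    intro f
    have hfin1 : ∫⁻ x, f x ∂(μ.map shiftF) ≠ ⊤ :=
      (f.lintegral_lt_top_of_nnreal _).ne
    have hfin2 : ∫⁻ x, f x ∂μ ≠ ⊤ := (f.lintegral_lt_top_of_nnreal _).ne
    rw [← ENNReal.toReal_eq_toReal_iff' hfin1 hfin2,
      BoundedContinuousFunction.toReal_lintegral_coe_eq_integral f (μ.map shiftF),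
      BoundedContinuousFunction.toReal_lintegral_coe_eq_integral f μ]
    have hcont : Continuous fun x : ℕ → F => (f x : ℝ) :=
      NNReal.continuous_coe.comp f.continuous
    have hmap : ∫ x, (f x : ℝ) ∂(μ.map shiftF) = ∫ x, (f (shiftF x) : ℝ) ∂μ :=
      integral_map measurable_shiftF.aemeasurable hcont.aestronglyMeasurable
    rw [hmap]
    set g1 : C(ℕ → F, ℝ) := ⟨fun x => (f (shiftF x) : ℝ), hcont.comp continuous_shiftF⟩
      with hg1
    set g2 : C(ℕ → F, ℝ) := ⟨fun x => (f x : ℝ), hcont⟩ with hg2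
    have heqi : (fun i => ∫ x, g1 x ∂(μs i)) = fun i => ∫ x, g2 x ∂(μs i) := by
      funext i
      show ∫ x, (f (shiftF x) : ℝ) ∂(μs i) = ∫ x, (f x : ℝ) ∂(μs i)
      rw [← integral_map measurable_shiftF.aemeasurable hcont.aestronglyMeasurable,
        (hμs i).1.2]
    have hc1 := hconv g1
    rw [heqi] at hc1
    exact tendsto_nhds_unique hc1 (hconv g2)
  have hμinv : IsInvProbF μ := ⟨hPμ, hinvμ⟩
  -- convergence of cylinder measures
  have hcylconv : ∀ (n : ℕ) (w : Fin n → F),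
      Tendsto (fun i => (μs i (cylinderF w)).toReal) atTop (𝓝 ((μ (cylinderF w)).toReal)) := by
    intro n w
    have h1 := hconv (BoundedContinuousFunction.indicator (cylinderF w)
      (isClopen_cylinderF w)).toContinuousMap
    have h2 : (fun i => ∫ x, ((BoundedContinuousFunction.indicator (cylinderF w)
        (isClopen_cylinderF w)).toContinuousMap) x ∂(μs i))
        = fun i => (μs i (cylinderF w)).toReal := by
      funext i; exact integral_indicator_cyl w (μs i)
    have h3 : ∫ x, ((BoundedContinuousFunction.indicator (cylinderF w)
        (isClopen_cylinderF w)).toContinuousMap) x ∂μ = (μ (cylinderF w)).toReal :=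
      integral_indicator_cyl w μ
    rw [h2, h3] at h1
    exact h1
  -- convergence of block entropies
  have hHconv : ∀ n : ℕ, Tendsto (fun i => HblockF (μs i) n) atTop (𝓝 (HblockF μ n)) := by
    intro n
    simp only [HblockF_eq_hnat]
    apply Tendsto.div_const
    exact tendsto_finset_sum _ fun w _ =>
      (Real.continuous_negMulLog.continuousAt).tendsto.comp (hcylconv n w)
  set C : ℝ := Real.log (Fintype.card F) / Real.log 2 with hC_def
  have hC : ∀ i, entropyF (μs i) ≤ C := fun i => entropyF_le_const _ (hμs i).1.2
  have hIconv : Tendsto (fun i => ∫ x, φ x ∂(μs i)) atTop (𝓝 (∫ x, φ x ∂μ)) :=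
    hconv ⟨φ, hφ⟩
  -- μ is maximizing
  have hmax : ∀ ν : Measure (ℕ → F), IsInvProbF ν → ∫ x, φ x ∂ν ≤ ∫ x, φ x ∂μ := by
    intro ν hν
    haveI := hν.1
    have hb : ∀ i, ∫ x, φ x ∂ν ≤ ∫ x, φ x ∂(μs i) + C / β i := by
      intro i
      have he := (hμs i).2 ν hν
      have h0 : 0 ≤ entropyF ν := entropyF_nonneg ν hν.2
      have h1 : entropyF (μs i) ≤ C := hC i
      have hβi := hβpos i
      have h2 : β i * ∫ x, φ x ∂ν ≤ β i * (∫ x, φ x ∂(μs i) + C / β i) := by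
        have h3 : β i * (∫ x, φ x ∂(μs i) + C / β i) = β i * ∫ x, φ x ∂(μs i) + C := by
          field_simp
        rw [h3]; linarith
      exact le_of_mul_le_mul_left h2 hβi
    have hlim : Tendsto (fun i => ∫ x, φ x ∂(μs i) + C / β i) atTop
        (𝓝 (∫ x, φ x ∂μ + 0)) :=
      hIconv.add (Tendsto.div_atTop tendsto_const_nhds hβ)
    rw [add_zero] at hlim
    exact ge_of_tendsto' hlim hb
  have hμmax : IsMaximizingF φ μ := ⟨hμinv, hmax⟩
  -- entropy of any maximizing measure is at most that of μ
  have hents : ∀ ν : Measure (ℕ → F), IsMaximizingF φ ν → entropyF ν ≤ entropyF μ := by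
    intro ν hν
    haveI := hν.1.1
    have hb : ∀ i, entropyF ν ≤ entropyF (μs i) := by
      intro i
      have he := (hμs i).2 ν hν.1
      have hI : ∫ x, φ x ∂(μs i) ≤ ∫ x, φ x ∂ν := hν.2 (μs i) (hμs i).1
      have hI2 : β i * ∫ x, φ x ∂(μs i) ≤ β i * ∫ x, φ x ∂ν :=
        mul_le_mul_of_nonneg_left hI (le_of_lt (hβpos i))
      linarith
    have hdiv : ∀ n : ℕ, n ≠ 0 → entropyF ν ≤ HblockF μ n / n := by
      intro n hn
      have hball : ∀ i, entropyF ν ≤ HblockF (μs i) n / n := fun i =>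
        (hb i).trans (entropyF_le_div (μs i) (hμs i).1.2 hn)
      exact ge_of_tendsto' ((hHconv n).div_const _) hball
    rw [entropyF_eq_lim μ hinvμ, Subadditive.lim]
    refine le_csInf (Set.Nonempty.image _ ⟨1, Set.mem_Ici.mpr le_rfl⟩) ?_
    rintro b ⟨n, hn, rfl⟩
    exact hdiv n (Nat.one_le_iff_ne_zero.mp hn)
  refine ⟨hμmax, ?_⟩
  have hmem : entropyF μ ∈ {r | ∃ ν : Measure (ℕ → F), IsMaximizingF φ ν ∧ r = entropyF ν} :=
    ⟨μ, hμmax, rfl⟩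
  have hub : ∀ r ∈ {r | ∃ ν : Measure (ℕ → F), IsMaximizingF φ ν ∧ r = entropyF ν},
      r ≤ entropyF μ := by
    rintro r ⟨ν, hν, rfl⟩
    exact hents ν hν
  exact le_antisymm (le_csSup ⟨_, hub⟩ hmem) (csSup_le ⟨_, hmem⟩ hub)

end
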